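/- Let H, G be real Hilbert spaces, f : H → (-∞,+∞] proper, convex, lower semicontinuous, A : H → G continuous linear, h : H → ℝ convex Fréchet differentiable, c > 0, and for each t ≥ 0 let M₁(t) ∈ S₊(H) with cA*A + M₁(t) ⪰ α(t)I for some α(t) > 0. Fix (x, z, y) ∈ H × G × G and define R(t) as the unique solution of the strongly monotone inclusion M₁(t)x + cA*z − A*y − ∇h(x) ∈ ∂f(R(t) + x) + (cA*A + M₁(t))(R(t) + x). Then for all t, r ≥ 0: ‖R(t) − R(r)‖ ≤ (‖R(r)‖ / α(t)) · ‖M₁(t) − M₁(r)‖. -/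
import Mathlib


open scoped RealInnerProductSpace
open ContinuousLinearMap

/-- Convex subdifferential of an extended-real-valued function. -/
noncomputable def subdiff {H : Type*} [NormedAddCommGroup H] [InnerProductSpace ℝ H]
    (f : H → EReal) (x : H) : Set H :=
  {u | ∀ x' : H, f x + ((⟪u, x' - x⟫ : ℝ) : EReal) ≤ f x'}

theorem stmt2 {H G : Type*} [NormedAddCommGroup H] [InnerProductSpace ℝ H] [CompleteSpace H]
    [NormedAddCommGroup G] [InnerProductSpace ℝ G] [CompleteSpace G]
    (f : H → EReal)
    (hproper : (∃ x, f x ≠ ⊤) ∧ ∀ x, f x ≠ ⊥)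
    (hconv : ∀ x y : H, ∀ a b : ℝ, 0 ≤ a → 0 ≤ b → a + b = 1 →
      f (a • x + b • y) ≤ (a : EReal) * f x + (b : EReal) * f y)
    (hlsc : LowerSemicontinuous f)
    (A : H →L[ℝ] G)
    (h : H → ℝ) (h' : H → H) (hhconv : ConvexOn ℝ Set.univ h)
    (hgrad : ∀ x : H, HasGradientAt h (h' x) x)
    (c : ℝ) (hc : 0 < c)
    (M₁ : ℝ → H →L[ℝ] H)
    (hM₁sym : ∀ t, 0 ≤ t → ∀ u v : H, ⟪M₁ t u, v⟫ = ⟪u, M₁ t v⟫)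
    (hM₁pos : ∀ t, 0 ≤ t → ∀ u : H, 0 ≤ ⟪M₁ t u, u⟫)
    (α : ℝ → ℝ) (hα : ∀ t, 0 ≤ t → 0 < α t)
    (hstrong : ∀ t, 0 ≤ t → ∀ w : H, α t * ‖w‖ ^ 2 ≤ c * ‖A w‖ ^ 2 + ⟪M₁ t w, w⟫)
    (x : H) (z y : G)
    (R : ℝ → H)
    (hR : ∀ t, 0 ≤ t →
      M₁ t x + c • (adjoint A) z - (adjoint A) y - h' x
        - (c • (adjoint A) (A (R t + x)) + M₁ t (R t + x)) ∈ subdiff f (R t + x)) :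
    ∀ t r, 0 ≤ t → 0 ≤ r →
      ‖R t - R r‖ ≤ (‖R r‖ / α t) * ‖M₁ t - M₁ r‖ := by
  intro t r ht hr
  have htne : ∀ s, 0 ≤ s → f (R s + x) ≠ ⊤ := by
    intro s hs hTop
    obtain ⟨x₀, hx₀⟩ := hproper.1
    have h1 := hR s hs x₀
    rw [hTop] at h1
    simp only [EReal.top_add_coe, top_le_iff] at h1
    exact hx₀ h1
  -- real values
  set a : ℝ := (f (R t + x)).toReal with ha
  set b : ℝ := (f (R r + x)).toReal with hb
  have hfa : f (R t + x) = (a : EReal) := (EReal.coe_toReal (htne t ht) (hproper.2 _)).symm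
  have hfb : f (R r + x) = (b : EReal) := (EReal.coe_toReal (htne r hr) (hproper.2 _)).symm
  set ut := M₁ t x + c • (adjoint A) z - (adjoint A) y - h' x
      - (c • (adjoint A) (A (R t + x)) + M₁ t (R t + x)) with hut
  set ur := M₁ r x + c • (adjoint A) z - (adjoint A) y - h' x
      - (c • (adjoint A) (A (R r + x)) + M₁ r (R r + x)) with hur
  have h1 := hR t ht (R r + x)
  have h2 := hR r hr (R t + x)
  rw [hfa, hfb] at h1 h2
  rw [← EReal.coe_add, EReal.coe_le_coe_iff] at h1 h2
  have hsum : ⟪ut, (R r + x) - (R t + x)⟫ + ⟪ur, (R t + x) - (R r + x)⟫ ≤ 0 := by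
    linarith
  set w := R t - R r with hw
  have hdiff : ur - ut = c • (adjoint A) (A w) + M₁ t w + (M₁ t - M₁ r) (R r) := by
    rw [hut, hur, hw]
    simp only [ContinuousLinearMap.sub_apply, map_add, map_sub, smul_add, smul_sub]
    abel
  have key : c * ‖A w‖ ^ 2 + ⟪M₁ t w, w⟫ + ⟪(M₁ t - M₁ r) (R r), w⟫ ≤ 0 := by
    have e1 : (R r + x) - (R t + x) = -w := by rw [hw]; abel
    have e2 : (R t + x) - (R r + x) = w := by rw [hw]; abel
    rw [e1, e2, inner_neg_right] at hsum
    have : ⟪ur - ut, w⟫ ≤ 0 := by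
      rw [inner_sub_left]; linarith
    rw [hdiff, inner_add_left, inner_add_left, inner_smul_left,
      ContinuousLinearMap.adjoint_inner_left, real_inner_self_eq_norm_sq] at this
    simpa [RCLike.star_def, mul_comm] using this
  have hbound : α t * ‖w‖ ^ 2 ≤ ‖M₁ t - M₁ r‖ * ‖R r‖ * ‖w‖ := by
    have h3 := hstrong t ht w
    have h4 : -⟪(M₁ t - M₁ r) (R r), w⟫ ≤ ‖(M₁ t - M₁ r) (R r)‖ * ‖w‖ := by
      have := abs_real_inner_le_norm ((M₁ t - M₁ r) (R r)) w
      have := neg_abs_le ⟪(M₁ t - M₁ r) (R r), w⟫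
      linarith
    have h5 : ‖(M₁ t - M₁ r) (R r)‖ * ‖w‖ ≤ ‖M₁ t - M₁ r‖ * ‖R r‖ * ‖w‖ := by
      gcongr
      exact (M₁ t - M₁ r).le_opNorm (R r)
    linarith
  have hαt := hα t ht
  rcases eq_or_lt_of_le (norm_nonneg w) with h0 | h0
  · rw [← h0]
    exact mul_nonneg (div_nonneg (norm_nonneg _) hαt.le) (norm_nonneg _)
  · have h6 : α t * ‖w‖ ≤ ‖M₁ t - M₁ r‖ * ‖R r‖ := by
      rw [sq] at hbound
      nlinarith
    rw [div_mul_eq_mul_div, le_div_iff₀ hαt]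
    nlinarith
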